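/- For any v ∈ B_n and any index 1 ≤ i < n, the Demazure product satisfies s_i ⋆ v = h^B_{i,[i+1]}(s_i · v); moreover s_n ⋆ v = h^B_{n,[−n]}(s_n · v). -/

import Mathlib

/-!
We model the group `B_n` of signed permutations as the permutations `w` of `ℤ`
satisfying `w (-i) = -(w i)` that fix every point outside
`±[n] = {1, …, n, -1, …, -n}`.  The unfolding of `w` is the sequence
`w 1, …, w n, -(w n), …, -(w 1)`, indexed by positions `1, …, 2n`; identifying
the position/symbol `n + k` with `-(n + 1 - k)`, the entry of the unfolding at
position `m` is `w (valB n m)`, and the entry `x` sits at position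
`posB n w x`.  The total order `1 < 2 < ⋯ < n < -n < ⋯ < -2 < -1` on `±[n]`
is comparison of `ordVal`.
-/

/-- `w` is a signed permutation in `B_n`. -/
def IsSignedPerm (n : ℕ) (w : Equiv.Perm ℤ) : Prop :=
  (∀ i : ℤ, w (-i) = -(w i)) ∧ ∀ i : ℤ, (n : ℤ) < |i| → w i = i

/-- `x` is an element of `±[n]`. -/
def IsPM (n : ℕ) (x : ℤ) : Prop := x ≠ 0 ∧ |x| ≤ (n : ℤ)

/-- The element of `±[n]` denoted by the symbol `m ∈ {1, …, 2n}`: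
`m` itself if `m ≤ n`, and `-(2n + 1 - m)` otherwise. -/
def valB (n : ℕ) (m : ℕ) : ℤ :=
  if (m : ℤ) ≤ (n : ℤ) then (m : ℤ) else (m : ℤ) - (2 * n + 1)

/-- The rank of `x ∈ ±[n]` in the total order `1 < ⋯ < n < -n < ⋯ < -1`. -/
def ordVal (n : ℕ) (x : ℤ) : ℤ := if 0 < x then x else 2 * n + 1 + x

/-- The simple generators of `B_n`: `s_i` swaps `i ↔ i+1` and `-i ↔ -(i+1)`
for `1 ≤ i < n`, and `s_n` swaps `n ↔ -n`; for `n < i` we use the convention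
`s_{n+j} = s_{n-j}`. -/
def sB (n i : ℕ) : Equiv.Perm ℤ :=
  let j := if i ≤ n then i else 2 * n - i
  if j = n then Equiv.swap (n : ℤ) (-(n : ℤ))
  else Equiv.swap (j : ℤ) ((j : ℤ) + 1) * Equiv.swap (-(j : ℤ)) (-((j : ℤ) + 1))

/-- Swap the values `t ↔ q` and simultaneously `-t ↔ -q` (unless `t = -q`). -/
def bswap (t q : ℤ) : Equiv.Perm ℤ :=
  if t = -q then Equiv.swap t q else Equiv.swap t q * Equiv.swap (-t) (-q)

/-- The position of the entry `x` in the unfolding of `w`. -/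
def posB (n : ℕ) (w : Equiv.Perm ℤ) (x : ℤ) : ℤ := ordVal n (w⁻¹ x)

/-- One step of the type `B` hopping algorithm: among the entries `q` of the
ordered list `L` that are greater than `t` in the order on `±[n]` and appear
strictly to the right of `t` in the unfolding of `w`, pick the one occurring
furthest to the right in `L` (the last one in `L`), swap it with `t` and
simultaneously swap `-q` with `-t`; if there is no such entry, do nothing. -/
def hopStepB (n : ℕ) (t : ℤ) (L : List ℤ) (w : Equiv.Perm ℤ) : Equiv.Perm ℤ :=
  match (L.filter fun q =>
      decide (ordVal n t < ordVal n q ∧ posB n w t < posB n w q)).getLast? with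
  | none => w
  | some q => bswap t q * w

/-- The type `B` hopping operator `h^B_{t,L}`: iterate the hopping step until
the process stops, i.e. until no entry of `L` greater than `t` appears to the
right of `t`.  Each effective step moves `t` strictly to the right among the
`2n` positions of the unfolding, so `2n` iterations always suffice, after
which the step acts as the identity. -/
def hopB (n : ℕ) (t : ℤ) (L : List ℤ) (w : Equiv.Perm ℤ) : Equiv.Perm ℤ :=
  (hopStepB n t L)^[2 * n] w

/-- The product `c^B_{a,b} = s_a s_{a+1} ⋯ s_{a+b-1}` (the identity when
`b = 0`), using the convention `s_{n+j} = s_{n-j}`. -/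
def cB (n a b : ℕ) : Equiv.Perm ℤ := ((List.range b).map fun k => sB n (a + k)).prod

/-- The Coxeter length of an element of `B_n`: the least length of a word in
the simple generators `s_1, …, s_n` expressing it. -/
noncomputable def lengthB (n : ℕ) (w : Equiv.Perm ℤ) : ℕ :=
  sInf {k | ∃ l : List ℕ, l.length = k ∧ (∀ i ∈ l, 1 ≤ i ∧ i ≤ n) ∧ (l.map (sB n)).prod = w}

namespace DemB

lemma isPM_iff {n : ℕ} {x : ℤ} : IsPM n x ↔ x ≠ 0 ∧ -(n:ℤ) ≤ x ∧ x ≤ n := by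
  simp [IsPM, abs_le]

lemma sB_lt_def {n i : ℕ} (h : i < n) :
    sB n i = Equiv.swap (i:ℤ) ((i:ℤ)+1) * Equiv.swap (-(i:ℤ)) (-((i:ℤ)+1)) := by
  simp [sB, Nat.le_of_lt h, Nat.ne_of_lt h]

lemma sB_n_def {n : ℕ} : sB n n = Equiv.swap (n:ℤ) (-(n:ℤ)) := by
  simp [sB]

lemma sB_apply_lt {n i : ℕ} (h1 : 1 ≤ i) (h2 : i < n) (u : ℤ) :
    sB n i u = if u = (i:ℤ) then (i:ℤ)+1 else if u = (i:ℤ)+1 then (i:ℤ) else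
      if u = -(i:ℤ) then -((i:ℤ)+1) else if u = -((i:ℤ)+1) then -(i:ℤ) else u := by
  rw [sB_lt_def h2]
  have h1' : (1:ℤ) ≤ (i:ℤ) := by exact_mod_cast h1
  rcases eq_or_ne u (i:ℤ) with ha | ha <;> rcases eq_or_ne u ((i:ℤ)+1) with hb | hb <;>
    rcases eq_or_ne u (-(i:ℤ)) with hc | hc <;> rcases eq_or_ne u (-((i:ℤ)+1)) with hd | hd <;>
    first
    | omega
    | (simp only [Equiv.Perm.mul_apply, Equiv.swap_apply_def]
       split_ifs <;> omega)

lemma sB_apply_n {n : ℕ} (h : 1 ≤ n) (u : ℤ) :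
    sB n n u = if u = (n:ℤ) then -(n:ℤ) else if u = -(n:ℤ) then (n:ℤ) else u := by
  rw [sB_n_def]
  have h1' : (1:ℤ) ≤ (n:ℤ) := by exact_mod_cast h
  rcases eq_or_ne u (n:ℤ) with h2 | h2 <;> rcases eq_or_ne u (-(n:ℤ)) with h3 | h3 <;>
    simp [Equiv.swap_apply_def, h2, h3] <;> omega

lemma sB_invol {n i : ℕ} (h1 : 1 ≤ i) (h2 : i ≤ n) : sB n i * sB n i = 1 := by
  rcases eq_or_lt_of_le h2 with h | h
  · subst h
    ext u
    simp only [Equiv.Perm.mul_apply, Equiv.Perm.one_apply, sB_apply_n h1]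
    split_ifs <;> omega
  · ext u
    simp only [Equiv.Perm.mul_apply, Equiv.Perm.one_apply, sB_apply_lt h1 h]
    have h1' : (1:ℤ) ≤ (i:ℤ) := by exact_mod_cast h1
    split_ifs <;> omega

lemma sB_sp {n i : ℕ} (h1 : 1 ≤ i) (h2 : i ≤ n) : IsSignedPerm n (sB n i) := by
  have h1' : (1:ℤ) ≤ (i:ℤ) := by exact_mod_cast h1
  have h2' : (i:ℤ) ≤ (n:ℤ) := by exact_mod_cast h2
  rcases eq_or_lt_of_le h2 with h | h
  · subst h
    constructor
    · intro u; simp only [sB_apply_n h1]; split_ifs <;> omega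
    · intro u hu; rw [lt_abs] at hu; simp only [sB_apply_n h1]; split_ifs <;> omega
  · have h3' : (i:ℤ) < (n:ℤ) := by exact_mod_cast h
    constructor
    · intro u; simp only [sB_apply_lt h1 h]; split_ifs <;> omega
    · intro u hu; rw [lt_abs] at hu; simp only [sB_apply_lt h1 h]; split_ifs <;> omega

end DemB

namespace DemB2
open DemB

variable {n : ℕ} {w : Equiv.Perm ℤ} {x y : ℤ}

lemma sp_one : IsSignedPerm n 1 := ⟨fun i => rfl, fun i _ => rfl⟩

lemma sp_zero (hw : IsSignedPerm n w) : w 0 = 0 := by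
  have := hw.1 0
  simp at this
  omega

lemma sp_mul {u v : Equiv.Perm ℤ} (hu : IsSignedPerm n u) (hv : IsSignedPerm n v) :
    IsSignedPerm n (u * v) := by
  constructor
  · intro i; simp [Equiv.Perm.mul_apply, hv.1 i, hu.1 (v i)]
  · intro i hi; simp [Equiv.Perm.mul_apply, hv.2 i hi, hu.2 i hi]

lemma perm_apply_inv_self' (w : Equiv.Perm ℤ) (x : ℤ) : w (w⁻¹ x) = x :=
  w.apply_symm_apply x

lemma sp_inv (hw : IsSignedPerm n w) : IsSignedPerm n w⁻¹ := by
  constructor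
  · intro i
    apply w.injective
    rw [perm_apply_inv_self', hw.1, perm_apply_inv_self']
  · intro i hi
    have := hw.2 i hi
    conv_lhs => rw [← this]
    exact w.symm_apply_apply i

lemma sp_pm (hw : IsSignedPerm n w) (hx : IsPM n x) : IsPM n (w x) := by
  rw [isPM_iff] at hx ⊢
  constructor
  · intro h0
    have : w x = w 0 := by rw [h0, sp_zero hw]
    exact hx.1 (w.injective this)
  · by_contra hb
    push_neg at hb
    have hbig : (n:ℤ) < |w x| := by
      rcases abs_cases (w x) with ⟨h, _⟩ | ⟨h, _⟩ <;>
        rcases le_or_gt (-(n:ℤ)) (w x) with h' | h' <;> omega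
    have := hw.2 (w x) hbig
    have hx2 : w x = x := w.injective this
    rw [hx2] at hbig
    rcases abs_cases x with ⟨h, _⟩ | ⟨h, _⟩ <;> omega

lemma ordVal_bounds (hx : IsPM n x) : 1 ≤ ordVal n x ∧ ordVal n x ≤ 2*n := by
  rw [isPM_iff] at hx; unfold ordVal; split_ifs <;> omega

lemma ordVal_neg (hx : IsPM n x) : ordVal n (-x) = 2*n+1 - ordVal n x := by
  rw [isPM_iff] at hx; unfold ordVal; split_ifs <;> omega

lemma ordVal_inj (hx : IsPM n x) (hy : IsPM n y) (h : ordVal n x = ordVal n y) : x = y := by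
  rw [isPM_iff] at hx hy; unfold ordVal at h; split_ifs at h <;> omega

lemma ordVal_pos (hx : IsPM n x) : 0 < x ↔ ordVal n x ≤ n := by
  rw [isPM_iff] at hx; unfold ordVal; split_ifs <;> omega

lemma ordVal_pos_eq (h0 : 0 < x) : ordVal n x = x := by unfold ordVal; split_ifs <;> omega

lemma ordVal_neg_eq (h0 : x < 0) : ordVal n x = 2*n+1+x := by unfold ordVal; split_ifs <;> omega

end DemB2

namespace DemB3
open DemB DemB2

variable {n : ℕ} {w : Equiv.Perm ℤ}

/-- The positive roots of `B_n`, encoded as pairs. -/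
noncomputable def PB (n : ℕ) : Finset (ℤ × ℤ) :=
  ((Finset.Icc (1:ℤ) n) ×ˢ (Finset.Icc (-(n:ℤ)) n)).filter
    (fun p => p.2 ≠ 0 ∧ ordVal n p.1 < ordVal n p.2 ∧ ordVal n p.1 ≤ ordVal n (-p.2))

/-- Inversion set. -/
noncomputable def InvB (n : ℕ) (w : Equiv.Perm ℤ) : Finset (ℤ × ℤ) :=
  (PB n).filter (fun p => ordVal n (w p.2) < ordVal n (w p.1))

/-- Inversion number. -/
noncomputable def NB (n : ℕ) (w : Equiv.Perm ℤ) : ℕ := (InvB n w).card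

lemma mem_PB {p : ℤ × ℤ} : p ∈ PB n ↔ 1 ≤ p.1 ∧ p.1 ≤ n ∧ -(n:ℤ) ≤ p.2 ∧ p.2 ≤ n ∧ p.2 ≠ 0 ∧
    ordVal n p.1 < ordVal n p.2 ∧ ordVal n p.1 ≤ ordVal n (-p.2) := by
  simp [PB, Finset.mem_filter, Finset.mem_product, Finset.mem_Icc]
  tauto

lemma pm_fst {p : ℤ × ℤ} (hp : p ∈ PB n) : IsPM n p.1 := by
  rw [mem_PB] at hp; rw [isPM_iff]; omega

lemma pm_snd {p : ℤ × ℤ} (hp : p ∈ PB n) : IsPM n p.2 := by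
  rw [mem_PB] at hp; rw [isPM_iff]; omega

lemma NB_one : NB n 1 = 0 := by
  rw [NB, Finset.card_eq_zero, InvB]
  apply Finset.filter_false_of_mem
  intro p hp
  rw [mem_PB] at hp
  simp only [Equiv.Perm.one_apply]
  omega

end DemB3

namespace DemB4
open DemB DemB2 DemB3

variable {n i : ℕ} {w : Equiv.Perm ℤ} {u z : ℤ}

lemma ordVal_eq_iff (hu : IsPM n u) {c : ℤ} (hc1 : 1 ≤ c) (hc2 : c ≤ n) :
    (ordVal n u = c ↔ u = c) ∧ (ordVal n u = 2*(n:ℤ)+1-c ↔ u = -c) := by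
  rw [isPM_iff] at hu
  unfold ordVal
  split_ifs <;> constructor <;> constructor <;> intro <;> omega

set_option maxHeartbeats 1000000 in
lemma ordVal_sB_lt (h1 : 1 ≤ i) (h2 : i < n) (hu : IsPM n u) :
    ordVal n (sB n i u) =
      if ordVal n u = (i:ℤ) then (i:ℤ)+1
      else if ordVal n u = (i:ℤ)+1 then (i:ℤ)
      else if ordVal n u = 2*(n:ℤ)-(i:ℤ) then 2*(n:ℤ)+1-(i:ℤ)
      else if ordVal n u = 2*(n:ℤ)+1-(i:ℤ) then 2*(n:ℤ)-(i:ℤ)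
      else ordVal n u := by
  have h1' : (1:ℤ) ≤ (i:ℤ) := by exact_mod_cast h1
  have h2' : (i:ℤ) < (n:ℤ) := by exact_mod_cast h2
  rw [isPM_iff] at hu
  rw [sB_apply_lt h1 h2]
  unfold ordVal
  split_ifs <;> omega

set_option maxHeartbeats 1000000 in
lemma ordVal_sB_n (h : 1 ≤ n) (hu : IsPM n u) :
    ordVal n (sB n n u) =
      if ordVal n u = (n:ℤ) then (n:ℤ)+1
      else if ordVal n u = (n:ℤ)+1 then (n:ℤ)
      else ordVal n u := by
  have h1' : (1:ℤ) ≤ (n:ℤ) := by exact_mod_cast h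
  rw [isPM_iff] at hu
  rw [sB_apply_n h]
  unfold ordVal
  split_ifs <;> omega

set_option maxHeartbeats 4000000 in
lemma cmp_pres_lt (h1 : 1 ≤ i) (h2 : i < n) (hu : IsPM n u) (hz : IsPM n z)
    (hx : ¬((u = (i:ℤ) ∧ z = (i:ℤ)+1) ∨ (u = (i:ℤ)+1 ∧ z = (i:ℤ)) ∨
      (u = -(i:ℤ) ∧ z = -((i:ℤ)+1)) ∨ (u = -((i:ℤ)+1) ∧ z = -(i:ℤ)))) :
    (ordVal n (sB n i u) < ordVal n (sB n i z) ↔ ordVal n u < ordVal n z) := by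
  have h1' : (1:ℤ) ≤ (i:ℤ) := by exact_mod_cast h1
  have h2' : (i:ℤ) < (n:ℤ) := by exact_mod_cast h2
  have hu1 := ordVal_eq_iff hu (c := (i:ℤ)) (by omega) (by omega)
  have hu2 := ordVal_eq_iff hu (c := (i:ℤ)+1) (by omega) (by omega)
  have hz1 := ordVal_eq_iff hz (c := (i:ℤ)) (by omega) (by omega)
  have hz2 := ordVal_eq_iff hz (c := (i:ℤ)+1) (by omega) (by omega)
  have hbu := ordVal_bounds hu
  have hbz := ordVal_bounds hz
  have e1 : 2*(n:ℤ)+1-((i:ℤ)+1) = 2*(n:ℤ)-(i:ℤ) := by ring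
  rw [e1] at hu2 hz2
  have hx' : ¬((ordVal n u = (i:ℤ) ∧ ordVal n z = (i:ℤ)+1) ∨
      (ordVal n u = (i:ℤ)+1 ∧ ordVal n z = (i:ℤ)) ∨
      (ordVal n u = 2*(n:ℤ)-(i:ℤ) ∧ ordVal n z = 2*(n:ℤ)+1-(i:ℤ)) ∨
      (ordVal n u = 2*(n:ℤ)+1-(i:ℤ) ∧ ordVal n z = 2*(n:ℤ)-(i:ℤ))) := by
    intro hcon
    apply hx
    rcases hcon with ⟨ha,hb⟩|⟨ha,hb⟩|⟨ha,hb⟩|⟨ha,hb⟩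
    · exact Or.inl ⟨hu1.1.mp ha, hz2.1.mp hb⟩
    · exact Or.inr (Or.inl ⟨hu2.1.mp ha, hz1.1.mp hb⟩)
    · exact Or.inr (Or.inr (Or.inr ⟨hu2.2.mp ha, hz1.2.mp hb⟩))
    · exact Or.inr (Or.inr (Or.inl ⟨hu1.2.mp ha, hz2.2.mp hb⟩))
  push_neg at hx'
  rw [ordVal_sB_lt h1 h2 hu, ordVal_sB_lt h1 h2 hz]
  clear hx hu1 hu2 hz1 hz2 hu hz e1
  split_ifs <;> omega

set_option maxHeartbeats 1000000 in
lemma cmp_pres_n (h : 1 ≤ n) (hu : IsPM n u) (hz : IsPM n z)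
    (hx : ¬((u = (n:ℤ) ∧ z = -(n:ℤ)) ∨ (u = -(n:ℤ) ∧ z = (n:ℤ)))) :
    (ordVal n (sB n n u) < ordVal n (sB n n z) ↔ ordVal n u < ordVal n z) := by
  have h1' : (1:ℤ) ≤ (n:ℤ) := by exact_mod_cast h
  have hu1 := ordVal_eq_iff hu (c := (n:ℤ)) (by omega) (by omega)
  have hz1 := ordVal_eq_iff hz (c := (n:ℤ)) (by omega) (by omega)
  have e1 : 2*(n:ℤ)+1-(n:ℤ) = (n:ℤ)+1 := by ring
  rw [e1] at hu1 hz1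
  have hbu := ordVal_bounds hu
  have hbz := ordVal_bounds hz
  have hx' : ¬((ordVal n u = (n:ℤ) ∧ ordVal n z = (n:ℤ)+1) ∨
      (ordVal n u = (n:ℤ)+1 ∧ ordVal n z = (n:ℤ))) := by
    intro hcon
    apply hx
    rcases hcon with ⟨ha,hb⟩|⟨ha,hb⟩
    · exact Or.inl ⟨hu1.1.mp ha, hz1.2.mp hb⟩
    · exact Or.inr ⟨hu1.2.mp ha, hz1.1.mp hb⟩
  push_neg at hx'
  rw [ordVal_sB_n h hu, ordVal_sB_n h hz]
  clear hx hu1 hz1 hu hz e1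
  split_ifs <;> omega

end DemB4

namespace DemB5
open DemB DemB2 DemB3 DemB4

variable {n i : ℕ} {w : Equiv.Perm ℤ} {x y : ℤ}

lemma pm_neg (hx : IsPM n x) : IsPM n (-x) := by
  rw [isPM_iff] at hx ⊢; omega

lemma ordVal_cases (hx : IsPM n x) :
    (0 < x ∧ ordVal n x = x) ∨ (x < 0 ∧ ordVal n x = 2*(n:ℤ)+1+x) := by
  rw [isPM_iff] at hx; unfold ordVal; split_ifs <;> omega

lemma NB_step_lt (h1 : 1 ≤ i) (h2 : i < n) (hw : IsSignedPerm n w)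
    (hC : ordVal n (w⁻¹ (i:ℤ)) < ordVal n (w⁻¹ ((i:ℤ)+1))) :
    NB n (sB n i * w) = NB n w + 1 := by
  have h1' : (1:ℤ) ≤ (i:ℤ) := by exact_mod_cast h1
  have h2' : (i:ℤ) < (n:ℤ) := by exact_mod_cast h2
  have hwi : IsSignedPerm n w⁻¹ := sp_inv hw
  set x := w⁻¹ (i:ℤ) with hxdef
  set y := w⁻¹ ((i:ℤ)+1) with hydef
  have hiPM : IsPM n (i:ℤ) := isPM_iff.mpr ⟨by omega, by omega, by omega⟩
  have hi1PM : IsPM n ((i:ℤ)+1) := isPM_iff.mpr ⟨by omega, by omega, by omega⟩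
  have hxPM : IsPM n x := sp_pm hwi hiPM
  have hyPM : IsPM n y := sp_pm hwi hi1PM
  have hwx : w x = (i:ℤ) := w.apply_symm_apply _
  have hwy : w y = (i:ℤ)+1 := w.apply_symm_apply _
  have hwnx : w (-x) = -(i:ℤ) := by rw [hw.1, hwx]
  have hwny : w (-y) = -((i:ℤ)+1) := by rw [hw.1, hwy]
  have hxb := ordVal_bounds hxPM
  have hyb := ordVal_bounds hyPM
  have hnvx : ordVal n (-x) = 2*(n:ℤ)+1 - ordVal n x := ordVal_neg hxPM
  have hnvy : ordVal n (-y) = 2*(n:ℤ)+1 - ordVal n y := ordVal_neg hyPM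
  have hax := ordVal_cases hxPM
  have hay := ordVal_cases hyPM
  have hxny : x ≠ -y := by
    intro h
    have := congrArg w h
    rw [hwx, hwny] at this
    omega
  have hab_ne : ordVal n x + ordVal n y ≠ 2*(n:ℤ)+1 := by
    intro h
    exact hxny (ordVal_inj hxPM (pm_neg hyPM) (by omega))
  set π : ℤ × ℤ := if ordVal n x + ordVal n y < 2*(n:ℤ)+1 then (x, y) else (-y, -x) with hπdef
  have hπPB : π ∈ PB n := by
    rw [hπdef]
    split_ifs with hc
    · rw [mem_PB]
      dsimp only
      rw [isPM_iff] at hxPM hyPM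
      refine ⟨by omega, by omega, by omega, by omega, by omega, hC, by omega⟩
    · rw [mem_PB]
      dsimp only
      rw [isPM_iff] at hxPM hyPM
      have hmm : - - x = x := by ring
      rw [hmm]
      refine ⟨by omega, by omega, by omega, by omega, by omega, by omega, by omega⟩
  have hπw : ¬ (ordVal n (w π.2) < ordVal n (w π.1)) := by
    rw [hπdef]
    split_ifs with hc
    · simp only
      rw [hwx, hwy, ordVal_pos_eq (by omega), ordVal_pos_eq (by omega)]
      omega
    · simp only
      rw [hwnx, hwny, ordVal_neg_eq (by omega), ordVal_neg_eq (by omega)]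
      omega
  have hπsw : ordVal n ((sB n i * w) π.2) < ordVal n ((sB n i * w) π.1) := by
    rw [hπdef]
    split_ifs with hc
    · simp only [Equiv.Perm.mul_apply]
      rw [hwx, hwy, sB_apply_lt h1 h2, sB_apply_lt h1 h2]
      rw [if_pos rfl, if_neg (by omega), if_pos rfl]
      rw [ordVal_pos_eq (by omega), ordVal_pos_eq (by omega)]
      omega
    · simp only [Equiv.Perm.mul_apply]
      rw [hwnx, hwny, sB_apply_lt h1 h2, sB_apply_lt h1 h2]
      rw [if_neg (by omega), if_neg (by omega), if_pos rfl,
        if_neg (by omega), if_neg (by omega), if_neg (by omega), if_pos rfl]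
      rw [ordVal_neg_eq (by omega), ordVal_neg_eq (by omega)]
      omega
  have key : ∀ p ∈ PB n, p ≠ π →
      ((ordVal n ((sB n i * w) p.2) < ordVal n ((sB n i * w) p.1)) ↔
        (ordVal n (w p.2) < ordVal n (w p.1))) := by
    intro p hp hne
    have hp1 := pm_fst hp
    have hp2 := pm_snd hp
    have hpP := mem_PB.mp hp
    simp only [Equiv.Perm.mul_apply]
    apply cmp_pres_lt h1 h2 (sp_pm hw hp2) (sp_pm hw hp1)
    intro hcon
    apply hne
    rcases hcon with ⟨ha',hb'⟩|⟨ha',hb'⟩|⟨ha',hb'⟩|⟨ha',hb'⟩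
    · exfalso
      have e1 : p.1 = y := by apply w.injective; rw [hwy, hb']
      have e2 : p.2 = x := by apply w.injective; rw [hwx, ha']
      have hno : ordVal n p.1 < ordVal n p.2 := hpP.2.2.2.2.2.1
      rw [e1, e2] at hno
      omega
    · have e1 : p.1 = x := by apply w.injective; rw [hwx, hb']
      have e2 : p.2 = y := by apply w.injective; rw [hwy, ha']
      have hno : ordVal n p.1 ≤ ordVal n (-p.2) := hpP.2.2.2.2.2.2
      rw [e1, e2, hnvy] at hno
      rw [hπdef, if_pos (by omega)]
      exact Prod.ext_iff.mpr ⟨e1, e2⟩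
    · have e1 : p.1 = -y := by apply w.injective; rw [hwny, hb']
      have e2 : p.2 = -x := by apply w.injective; rw [hwnx, ha']
      have hno : ordVal n p.1 ≤ ordVal n (-p.2) := hpP.2.2.2.2.2.2
      have hmm : - - x = x := by ring
      rw [e1, e2, hmm, hnvy] at hno
      rw [hπdef, if_neg (by omega)]
      exact Prod.ext_iff.mpr ⟨e1, e2⟩
    · exfalso
      have e1 : p.1 = -x := by apply w.injective; rw [hwnx, hb']
      have e2 : p.2 = -y := by apply w.injective; rw [hwny, ha']
      have hno : ordVal n p.1 < ordVal n p.2 := hpP.2.2.2.2.2.1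
      rw [e1, e2, hnvx, hnvy] at hno
      omega
  have hInv : InvB n (sB n i * w) = insert π (InvB n w) := by
    ext p
    simp only [InvB, Finset.mem_insert, Finset.mem_filter]
    constructor
    · rintro ⟨hp, hs⟩
      by_cases hpπ : p = π
      · exact Or.inl hpπ
      · exact Or.inr ⟨hp, (key p hp hpπ).mp hs⟩
    · rintro (hpπ | ⟨hp, hs⟩)
      · subst hpπ
        exact ⟨hπPB, hπsw⟩
      · by_cases hpπ : p = π
        · subst hpπ
          exact ⟨hπPB, hπsw⟩
        · exact ⟨hp, (key p hp hpπ).mpr hs⟩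
  have hπnotin : π ∉ InvB n w := by
    simp only [InvB, Finset.mem_filter, not_and]
    intro _
    exact hπw
  rw [NB, NB, hInv, Finset.card_insert_of_notMem hπnotin]

end DemB5

namespace DemB6
open DemB DemB2 DemB3 DemB4 DemB5

variable {n i : ℕ} {w : Equiv.Perm ℤ}

lemma NB_step_n (h : 1 ≤ n) (hw : IsSignedPerm n w)
    (hC : ordVal n (w⁻¹ (n:ℤ)) < ordVal n (w⁻¹ (-(n:ℤ)))) :
    NB n (sB n n * w) = NB n w + 1 := by
  have h1' : (1:ℤ) ≤ (n:ℤ) := by exact_mod_cast h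
  have hwi : IsSignedPerm n w⁻¹ := sp_inv hw
  set x := w⁻¹ (n:ℤ) with hxdef
  have hnx : w⁻¹ (-(n:ℤ)) = -x := hwi.1 (n:ℤ)
  rw [hnx] at hC
  have hnPM : IsPM n (n:ℤ) := isPM_iff.mpr ⟨by omega, by omega, by omega⟩
  have hxPM : IsPM n x := sp_pm hwi hnPM
  have hwx : w x = (n:ℤ) := w.apply_symm_apply _
  have hwnx : w (-x) = -(n:ℤ) := by rw [hw.1, hwx]
  have hxb := ordVal_bounds hxPM
  have hnvx : ordVal n (-x) = 2*(n:ℤ)+1 - ordVal n x := ordVal_neg hxPM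
  have hax := ordVal_cases hxPM
  have hxr := isPM_iff.mp hxPM
  have hxpos : 0 < x := by rcases hax with ⟨h0, _⟩ | ⟨h0, he⟩ <;> omega
  have hvn : ordVal n ((n:ℤ)) = (n:ℤ) := ordVal_pos_eq (by omega)
  have hvnn : ordVal n (-(n:ℤ)) = (n:ℤ)+1 := by rw [ordVal_neg_eq (by omega)]; ring
  have hs1 : sB n n ((n:ℤ)) = -(n:ℤ) := by rw [sB_apply_n h, if_pos rfl]
  have hs2 : sB n n (-(n:ℤ)) = (n:ℤ) := by
    rw [sB_apply_n h, if_neg (by omega), if_pos rfl]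
  set π : ℤ × ℤ := (x, -x) with hπdef
  have hπPB : π ∈ PB n := by
    rw [hπdef, mem_PB]
    dsimp only
    rw [isPM_iff] at hxPM
    have hmm : - - x = x := by ring
    rw [hmm]
    refine ⟨by omega, by omega, by omega, by omega, by omega, hC, by omega⟩
  have hπw : ¬ (ordVal n (w π.2) < ordVal n (w π.1)) := by
    rw [hπdef]
    dsimp only
    rw [hwx, hwnx, hvn, hvnn]
    omega
  have hπsw : ordVal n ((sB n n * w) π.2) < ordVal n ((sB n n * w) π.1) := by
    rw [hπdef]
    simp only [Equiv.Perm.mul_apply]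
    rw [hwx, hwnx, hs1, hs2, hvn, hvnn]
    omega
  have key : ∀ p ∈ PB n, p ≠ π →
      ((ordVal n ((sB n n * w) p.2) < ordVal n ((sB n n * w) p.1)) ↔
        (ordVal n (w p.2) < ordVal n (w p.1))) := by
    intro p hp hne
    have hp1 := pm_fst hp
    have hp2 := pm_snd hp
    have hpP := mem_PB.mp hp
    simp only [Equiv.Perm.mul_apply]
    apply cmp_pres_n h (sp_pm hw hp2) (sp_pm hw hp1)
    intro hcon
    apply hne
    rcases hcon with ⟨ha',hb'⟩|⟨ha',hb'⟩
    · exfalso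
      have e1 : p.1 = -x := by apply w.injective; rw [hwnx, hb']
      have e2 : p.2 = x := by apply w.injective; rw [hwx, ha']
      have hno : ordVal n p.1 < ordVal n p.2 := hpP.2.2.2.2.2.1
      rw [e1, e2] at hno
      omega
    · have e1 : p.1 = x := by apply w.injective; rw [hwx, hb']
      have e2 : p.2 = -x := by apply w.injective; rw [hwnx, ha']
      rw [hπdef]
      exact Prod.ext_iff.mpr ⟨e1, e2⟩
  have hInv : InvB n (sB n n * w) = insert π (InvB n w) := by
    ext p
    simp only [InvB, Finset.mem_insert, Finset.mem_filter]
    constructor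
    · rintro ⟨hp, hs⟩
      by_cases hpπ : p = π
      · exact Or.inl hpπ
      · exact Or.inr ⟨hp, (key p hp hpπ).mp hs⟩
    · rintro (hpπ | ⟨hp, hs⟩)
      · subst hpπ
        exact ⟨hπPB, hπsw⟩
      · by_cases hpπ : p = π
        · subst hpπ
          exact ⟨hπPB, hπsw⟩
        · exact ⟨hp, (key p hp hpπ).mpr hs⟩
  have hπnotin : π ∉ InvB n w := by
    simp only [InvB, Finset.mem_filter, not_and]
    intro _
    exact hπw
  rw [NB, NB, hInv, Finset.card_insert_of_notMem hπnotin]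

/-- The target entry of the descent test. -/
def tgt (n i : ℕ) : ℤ := if i = n then -(n:ℤ) else (i:ℤ)+1

/-- The descent condition. -/
def Ci (n i : ℕ) (w : Equiv.Perm ℤ) : Prop :=
  ordVal n (w⁻¹ (i:ℤ)) < ordVal n (w⁻¹ (tgt n i))

lemma tgt_lt (h : i < n) : tgt n i = (i:ℤ)+1 := by
  rw [tgt, if_neg (Nat.ne_of_lt h)]

lemma tgt_n : tgt n n = -(n:ℤ) := by rw [tgt, if_pos rfl]

lemma tgt_pm (h1 : 1 ≤ i) (h2 : i ≤ n) : IsPM n (tgt n i) := by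
  have h1' : (1:ℤ) ≤ (i:ℤ) := by exact_mod_cast h1
  have h2' : (i:ℤ) ≤ (n:ℤ) := by exact_mod_cast h2
  rcases eq_or_lt_of_le h2 with h | h
  · rw [h, tgt_n, isPM_iff]
    subst h
    constructor
    · omega
    · omega
  · have h3' : (i:ℤ) < (n:ℤ) := by exact_mod_cast h
    rw [tgt_lt h, isPM_iff]
    omega

lemma i_pm (h1 : 1 ≤ i) (h2 : i ≤ n) : IsPM n (i:ℤ) := by
  have h1' : (1:ℤ) ≤ (i:ℤ) := by exact_mod_cast h1
  have h2' : (i:ℤ) ≤ (n:ℤ) := by exact_mod_cast h2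
  rw [isPM_iff]
  omega

lemma sB_tgt1 (h1 : 1 ≤ i) (h2 : i ≤ n) : sB n i (i:ℤ) = tgt n i := by
  rcases eq_or_lt_of_le h2 with h | h
  · subst h
    rw [tgt_n, sB_apply_n h1, if_pos rfl]
  · rw [tgt_lt h, sB_apply_lt h1 h, if_pos rfl]

lemma sB_tgt2 (h1 : 1 ≤ i) (h2 : i ≤ n) : sB n i (tgt n i) = (i:ℤ) := by
  have h1' : (1:ℤ) ≤ (i:ℤ) := by exact_mod_cast h1
  rcases eq_or_lt_of_le h2 with h | h
  · subst h
    rw [tgt_n, sB_apply_n h1, if_neg (by omega), if_pos rfl]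
  · have h3' : (i:ℤ) < (n:ℤ) := by exact_mod_cast h
    rw [tgt_lt h, sB_apply_lt h1 h, if_neg (by omega), if_pos rfl]

lemma NB_step (h1 : 1 ≤ i) (h2 : i ≤ n) (hw : IsSignedPerm n w) (hC : Ci n i w) :
    NB n (sB n i * w) = NB n w + 1 := by
  rcases eq_or_lt_of_le h2 with h | h
  · rw [Ci, h, tgt_n] at hC
    rw [h]
    exact NB_step_n (h ▸ h1) hw hC
  · rw [Ci, tgt_lt h] at hC
    exact NB_step_lt h1 h hw hC

lemma sB_inv (h1 : 1 ≤ i) (h2 : i ≤ n) : (sB n i)⁻¹ = sB n i := by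
  rw [← mul_eq_one_iff_inv_eq]
  exact sB_invol h1 h2

lemma Ci_flip (h1 : 1 ≤ i) (h2 : i ≤ n) (hw : IsSignedPerm n w) :
    (Ci n i (sB n i * w) ↔ ¬ Ci n i w) := by
  have hwi : IsSignedPerm n w⁻¹ := sp_inv hw
  have hmi : ∀ z : ℤ, (sB n i * w)⁻¹ z = w⁻¹ (sB n i z) := by
    intro z
    rw [mul_inv_rev, Equiv.Perm.mul_apply, sB_inv h1 h2]
  have hx := sp_pm hwi (i_pm h1 h2)
  have hy := sp_pm hwi (tgt_pm h1 h2)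
  have htne : tgt n i ≠ (i:ℤ) := by
    have h1' : (1:ℤ) ≤ (i:ℤ) := by exact_mod_cast h1
    have h2' : (i:ℤ) ≤ (n:ℤ) := by exact_mod_cast h2
    rcases eq_or_lt_of_le h2 with h | h
    · rw [h, tgt_n]
      subst h
      omega
    · rw [tgt_lt h]
      omega
  have hne : ordVal n (w⁻¹ (i:ℤ)) ≠ ordVal n (w⁻¹ (tgt n i)) := by
    intro hcon
    have h3 := ordVal_inj hx hy hcon
    have h4 := congrArg w h3
    rw [perm_apply_inv_self', perm_apply_inv_self'] at h4
    exact htne h4.symm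
  rw [Ci, Ci, hmi, hmi, sB_tgt1 h1 h2, sB_tgt2 h1 h2]
  constructor
  · intro hlt hlt2
    omega
  · intro hlt
    omega

lemma NB_step' (h1 : 1 ≤ i) (h2 : i ≤ n) (hw : IsSignedPerm n w) (hC : ¬ Ci n i w) :
    NB n w = NB n (sB n i * w) + 1 := by
  have hC2 : Ci n i (sB n i * w) := (Ci_flip h1 h2 hw).mpr hC
  have := NB_step h1 h2 (sp_mul (sB_sp h1 h2) hw) hC2
  rw [← mul_assoc, sB_invol h1 h2, one_mul] at this
  exact this

end DemB6

namespace DemB7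
open DemB DemB2 DemB3 DemB4 DemB5 DemB6

variable {n i : ℕ} {w : Equiv.Perm ℤ}

lemma NB_word (l : List ℕ) (hl : ∀ j ∈ l, 1 ≤ j ∧ j ≤ n) :
    IsSignedPerm n (l.map (sB n)).prod ∧ NB n (l.map (sB n)).prod ≤ l.length := by
  induction l with
  | nil => exact ⟨sp_one, by simp [NB_one]⟩
  | cons j l ih =>
    have hj := hl j (List.mem_cons_self (a := j) (l := l))
    have ih2 := ih (fun k hk => hl k (List.mem_cons_of_mem j hk))
    rw [List.map_cons, List.prod_cons]
    refine ⟨sp_mul (sB_sp hj.1 hj.2) ih2.1, ?_⟩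
    by_cases hC : Ci n j (l.map (sB n)).prod
    · rw [NB_step hj.1 hj.2 ih2.1 hC, List.length_cons]
      omega
    · have := NB_step' hj.1 hj.2 ih2.1 hC
      rw [List.length_cons]
      omega

lemma fix_of_no_descent (hw : IsSignedPerm n w)
    (hfix : ∀ j : ℕ, 1 ≤ j → j ≤ n → w (j:ℤ) = (j:ℤ)) : w = 1 := by
  ext u
  rw [Equiv.Perm.one_apply]
  rcases lt_trichotomy u 0 with hu | hu | hu
  · rcases le_or_gt (-(n:ℤ)) u with hb | hb
    · have h2 : w (-(-u)) = -(w (-u)) := hw.1 (-u)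
      have h3 : w (-u) = -u := by
        have : (-u) = (((-u).toNat : ℕ) : ℤ) := by omega
        rw [this]
        apply hfix
        · omega
        · omega
      rw [h3] at h2
      simpa using h2
    · exact hw.2 u (by rw [abs_of_neg hu]; omega)
  · rw [hu, sp_zero hw]
  · rcases le_or_gt u (n:ℤ) with hb | hb
    · have : u = ((u.toNat : ℕ) : ℤ) := by omega
      rw [this]
      apply hfix
      · omega
      · omega
    · exact hw.2 u (by rw [abs_of_pos hu]; omega)

lemma chain (hw : IsSignedPerm n w) (hC : ∀ j : ℕ, 1 ≤ j → j ≤ n → Ci n j w) :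
    ∀ k j : ℕ, 1 ≤ j → j + k ≤ n →
      ordVal n (w⁻¹ (j:ℤ)) + k ≤ ordVal n (w⁻¹ ((j+k:ℕ):ℤ)) := by
  intro k
  induction k with
  | zero => intro j _ _; simp
  | succ k ih =>
    intro j hj hjk
    have h1 := ih j hj (by omega)
    have h2 := hC (j+k) (by omega) (by omega)
    rw [Ci, tgt_lt (by omega)] at h2
    have hc : (((j+k:ℕ)):ℤ) + 1 = (((j+(k+1):ℕ)):ℤ) := by push_cast; ring
    rw [hc] at h2
    omega

lemma no_descent (hn : 1 ≤ n) (hw : IsSignedPerm n w)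
    (hC : ∀ j : ℕ, 1 ≤ j → j ≤ n → Ci n j w) : w = 1 := by
  have hwi : IsSignedPerm n w⁻¹ := sp_inv hw
  have hfix : ∀ j : ℕ, 1 ≤ j → j ≤ n → w⁻¹ (j:ℤ) = (j:ℤ) := by
    intro j hj1 hj2
    have hjPM : IsPM n (j:ℤ) := i_pm hj1 hj2
    have hxPM : IsPM n (w⁻¹ (j:ℤ)) := sp_pm hwi hjPM
    have hxb := ordVal_bounds hxPM
    have hnb := ordVal_bounds (sp_pm hwi (i_pm hn le_rfl))
    -- upper: ordVal (w⁻¹ n) ≤ n from Ci at n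
    have hCn := hC n hn le_rfl
    rw [Ci, tgt_n] at hCn
    have hnn : w⁻¹ (-(n:ℤ)) = -(w⁻¹ (n:ℤ)) := hwi.1 (n:ℤ)
    rw [hnn, ordVal_neg (sp_pm hwi (i_pm hn le_rfl))] at hCn
    -- chains
    have hch1 := chain hw hC (j-1) 1 (by omega) (by omega)
    have hch2 := chain hw hC (n-j) j (by omega) (by omega)
    have he1 : 1 + (j-1) = j := by omega
    have he2 : j + (n-j) = n := by omega
    rw [he1] at hch1
    rw [he2] at hch2
    have h1b := ordVal_bounds (sp_pm hwi (i_pm le_rfl hn : IsPM n ((1:ℕ):ℤ)))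
    have heq : ordVal n (w⁻¹ (j:ℤ)) = (j:ℤ) := by
      push_cast at hch1 hch2 h1b ⊢
      omega
    have : 0 < w⁻¹ (j:ℤ) := by
      rw [ordVal_pos hxPM, heq]
      exact_mod_cast hj2
    rw [ordVal_pos_eq this] at heq
    exact heq
  have : w⁻¹ = 1 := fix_of_no_descent hwi hfix
  rw [← inv_inv w, this, inv_one]

lemma exists_word (hn : 1 ≤ n) (hw : IsSignedPerm n w) :
    ∃ l : List ℕ, l.length = NB n w ∧ (∀ j ∈ l, 1 ≤ j ∧ j ≤ n) ∧
      (l.map (sB n)).prod = w := by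
  generalize hk : NB n w = k
  induction k using Nat.strong_induction_on generalizing w with
  | _ k ih =>
    by_cases hall : ∀ j : ℕ, 1 ≤ j → j ≤ n → Ci n j w
    · have hw1 : w = 1 := no_descent hn hw hall
      subst hw1
      rw [NB_one] at hk
      exact ⟨[], by simp [hk.symm], by simp, by simp⟩
    · push_neg at hall
      obtain ⟨j, hj1, hj2, hjC⟩ := hall
      have hstep := NB_step' hj1 hj2 hw hjC
      have hsw : IsSignedPerm n (sB n j * w) := sp_mul (sB_sp hj1 hj2) hw
      have hklt : NB n (sB n j * w) < k := by omega
      obtain ⟨l, hl1, hl2, hl3⟩ := ih (NB n (sB n j * w)) hklt hsw rfl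
      refine ⟨j :: l, ?_, ?_, ?_⟩
      · rw [List.length_cons, hl1]; omega
      · intro m hm
        rcases List.mem_cons.mp hm with hm | hm
        · exact hm ▸ ⟨hj1, hj2⟩
        · exact hl2 m hm
      · rw [List.map_cons, List.prod_cons, hl3, ← mul_assoc, sB_invol hj1 hj2, one_mul]

lemma lengthB_eq (hn : 1 ≤ n) (hw : IsSignedPerm n w) : lengthB n w = NB n w := by
  obtain ⟨l, hl1, hl2, hl3⟩ := exists_word hn hw
  apply le_antisymm
  · exact Nat.sInf_le ⟨l, hl1, hl2, hl3⟩
  · refine le_csInf ⟨NB n w, ⟨l, hl1, hl2, hl3⟩⟩ ?_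
    rintro k ⟨m, hm1, hm2, hm3⟩
    have := (NB_word m hm2).2
    rw [hm3, hm1] at this
    exact this

lemma descent_iff (h1 : 1 ≤ i) (h2 : i ≤ n) {v : Equiv.Perm ℤ} (hv : IsSignedPerm n v) :
    (lengthB n v < lengthB n (sB n i * v) ↔ Ci n i v) := by
  have hn : 1 ≤ n := le_trans h1 h2
  have hsv : IsSignedPerm n (sB n i * v) := sp_mul (sB_sp h1 h2) hv
  rw [lengthB_eq hn hv, lengthB_eq hn hsv]
  by_cases hC : Ci n i v
  · rw [NB_step h1 h2 hv hC]
    simp [hC]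
  · have := NB_step' h1 h2 hv hC
    constructor
    · intro hlt
      omega
    · intro hc
      exact absurd hc hC

end DemB7

namespace DemB8
open DemB DemB2 DemB3 DemB4 DemB5 DemB6 DemB7

variable {n i : ℕ} {w : Equiv.Perm ℤ}

lemma hopStep_lt (h1 : 1 ≤ i) (h2 : i < n) (w : Equiv.Perm ℤ) :
    hopStepB n (i:ℤ) [(i:ℤ)+1] w =
      if posB n w (i:ℤ) < posB n w ((i:ℤ)+1) then sB n i * w else w := by
  have h1' : (1:ℤ) ≤ (i:ℤ) := by exact_mod_cast h1
  have h2' : (i:ℤ) < (n:ℤ) := by exact_mod_cast h2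
  have hov : ordVal n (i:ℤ) < ordVal n ((i:ℤ)+1) := by
    rw [ordVal_pos_eq (by omega), ordVal_pos_eq (by omega)]
    omega
  by_cases hp : posB n w (i:ℤ) < posB n w ((i:ℤ)+1)
  · rw [if_pos hp]
    have hf : ([(i:ℤ)+1].filter fun q =>
        decide (ordVal n (i:ℤ) < ordVal n q ∧ posB n w (i:ℤ) < posB n w q)) = [(i:ℤ)+1] := by
      simp [hov, hp]
    unfold hopStepB
    rw [hf]
    show bswap (i:ℤ) ((i:ℤ)+1) * w = sB n i * w
    rw [bswap, if_neg (by omega), sB_lt_def h2]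
  · rw [if_neg hp]
    have hf : ([(i:ℤ)+1].filter fun q =>
        decide (ordVal n (i:ℤ) < ordVal n q ∧ posB n w (i:ℤ) < posB n w q)) = [] := by
      simp [hov, hp]
    unfold hopStepB
    rw [hf]
    rfl

lemma hopStep_n (hn : 1 ≤ n) (w : Equiv.Perm ℤ) :
    hopStepB n (n:ℤ) [-(n:ℤ)] w =
      if posB n w (n:ℤ) < posB n w (-(n:ℤ)) then sB n n * w else w := by
  have h1' : (1:ℤ) ≤ (n:ℤ) := by exact_mod_cast hn
  have hov : ordVal n (n:ℤ) < ordVal n (-(n:ℤ)) := by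
    rw [ordVal_pos_eq (by omega), ordVal_neg_eq (by omega)]
    omega
  by_cases hp : posB n w (n:ℤ) < posB n w (-(n:ℤ))
  · rw [if_pos hp]
    have hf : ([-(n:ℤ)].filter fun q =>
        decide (ordVal n (n:ℤ) < ordVal n q ∧ posB n w (n:ℤ) < posB n w q)) = [-(n:ℤ)] := by
      simp [hov, hp]
    unfold hopStepB
    rw [hf]
    show bswap (n:ℤ) (-(n:ℤ)) * w = sB n n * w
    rw [bswap, if_pos (by ring), sB_n_def]
  · rw [if_neg hp]
    have hf : ([-(n:ℤ)].filter fun q =>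
        decide (ordVal n (n:ℤ) < ordVal n q ∧ posB n w (n:ℤ) < posB n w q)) = [] := by
      simp [hov, hp]
    unfold hopStepB
    rw [hf]
    rfl

lemma ordVal_ne (hn : 1 ≤ n) {v : Equiv.Perm ℤ} (hv : IsSignedPerm n v) {a b : ℤ}
    (ha : IsPM n a) (hb : IsPM n b) (hab : a ≠ b) :
    ordVal n (v⁻¹ a) ≠ ordVal n (v⁻¹ b) := by
  intro hcon
  have hvi := sp_inv hv
  have h3 := ordVal_inj (sp_pm hvi ha) (sp_pm hvi hb) hcon
  have h4 := congrArg v h3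
  rw [perm_apply_inv_self', perm_apply_inv_self'] at h4
  exact hab h4

end DemB8

open DemB DemB2 DemB3 DemB4 DemB5 DemB6 DemB7 DemB8 in
/-- for any `v ∈ B_n`, `s_i ⋆ v = h^B_{i,[i+1]}(s_i · v)` for
`1 ≤ i < n`, and `s_n ⋆ v = h^B_{n,[-n]}(s_n · v)`.  The Demazure product `⋆`
of `B_n` is encoded as an arbitrary associative product with unit `1`
satisfying the defining rule on the simple generators. -/
theorem demazure_simple_hopB
    (n : ℕ) (v : Equiv.Perm ℤ) (hv : IsSignedPerm n v)
    (star : Equiv.Perm ℤ → Equiv.Perm ℤ → Equiv.Perm ℤ)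
    (hassoc : ∀ a b c, star (star a b) c = star a (star b c))
    (hunit : ∀ a, star 1 a = a)
    (hgen : ∀ i, 1 ≤ i → i ≤ n → ∀ u,
      star (sB n i) u = if lengthB n u < lengthB n (sB n i * u) then sB n i * u else u) :
    (∀ i : ℕ, 1 ≤ i → i < n →
      star (sB n i) v = hopB n (i : ℤ) [(i : ℤ) + 1] (sB n i * v)) ∧
    star (sB n n) v = hopB n (n : ℤ) [-(n : ℤ)] (sB n n * v) := by
  constructor
  · intro i hi1 hi2
    have hn : 1 ≤ n := by omega
    have h2 : i ≤ n := le_of_lt hi2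
    have h1' : (1:ℤ) ≤ (i:ℤ) := by exact_mod_cast hi1
    have h2' : (i:ℤ) < (n:ℤ) := by exact_mod_cast hi2
    have hiPM : IsPM n (i:ℤ) := i_pm hi1 h2
    have hi1PM : IsPM n ((i:ℤ)+1) := by rw [isPM_iff]; omega
    have hs1 : sB n i (i:ℤ) = (i:ℤ)+1 := by
      have := sB_tgt1 hi1 h2
      rwa [tgt_lt hi2] at this
    have hs2 : sB n i ((i:ℤ)+1) = (i:ℤ) := by
      have := sB_tgt2 hi1 h2
      rwa [tgt_lt hi2] at this
    have hmi : ∀ z : ℤ, (sB n i * v)⁻¹ z = v⁻¹ (sB n i z) := by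
      intro z
      rw [mul_inv_rev, Equiv.Perm.mul_apply, sB_inv hi1 h2]
    have hpos1 : posB n (sB n i * v) (i:ℤ) = ordVal n (v⁻¹ ((i:ℤ)+1)) := by
      rw [posB, hmi, hs1]
    have hpos2 : posB n (sB n i * v) ((i:ℤ)+1) = ordVal n (v⁻¹ (i:ℤ)) := by
      rw [posB, hmi, hs2]
    have hne := ordVal_ne hn hv hiPM hi1PM (by omega)
    have hCiff : Ci n i v ↔ ordVal n (v⁻¹ (i:ℤ)) < ordVal n (v⁻¹ ((i:ℤ)+1)) := by
      rw [Ci, tgt_lt hi2]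
    rw [hgen i hi1 h2 v]
    by_cases hC : Ci n i v
    · rw [if_pos ((descent_iff hi1 h2 hv).mpr hC)]
      rw [hCiff] at hC
      have hfix : hopStepB n (i:ℤ) [(i:ℤ)+1] (sB n i * v) = sB n i * v := by
        rw [hopStep_lt hi1 hi2, if_neg (by rw [hpos1, hpos2]; omega)]
      rw [hopB, Function.iterate_fixed hfix]
    · rw [if_neg (fun hc => hC ((descent_iff hi1 h2 hv).mp hc))]
      rw [hCiff] at hC
      have hstep1 : hopStepB n (i:ℤ) [(i:ℤ)+1] (sB n i * v) = v := by
        rw [hopStep_lt hi1 hi2, if_pos (by rw [hpos1, hpos2]; omega)]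
        rw [← mul_assoc, sB_invol hi1 h2, one_mul]
      have hstep2 : hopStepB n (i:ℤ) [(i:ℤ)+1] v = v := by
        rw [hopStep_lt hi1 hi2, if_neg (by rw [posB, posB]; omega)]
      rw [hopB]
      have h2n : 2*n = (2*n - 1) + 1 := by omega
      rw [h2n, Function.iterate_succ_apply, hstep1, Function.iterate_fixed hstep2]
  · rcases Nat.eq_zero_or_pos n with hn | hn
    · subst hn
      have hs : sB 0 0 = 1 := by
        rw [sB_n_def]
        norm_num
        rfl
      rw [hs, hunit, hopB]
      norm_num
    · have h1' : (1:ℤ) ≤ (n:ℤ) := by exact_mod_cast hn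
      have hnPM : IsPM n (n:ℤ) := i_pm hn le_rfl
      have hnnPM : IsPM n (-(n:ℤ)) := pm_neg hnPM
      have hs1 : sB n n (n:ℤ) = -(n:ℤ) := by
        have := sB_tgt1 hn le_rfl
        rwa [tgt_n] at this
      have hs2 : sB n n (-(n:ℤ)) = (n:ℤ) := by
        have := sB_tgt2 hn le_rfl
        rwa [tgt_n] at this
      have hmi : ∀ z : ℤ, (sB n n * v)⁻¹ z = v⁻¹ (sB n n z) := by
        intro z
        rw [mul_inv_rev, Equiv.Perm.mul_apply, sB_inv hn le_rfl]
      have hpos1 : posB n (sB n n * v) (n:ℤ) = ordVal n (v⁻¹ (-(n:ℤ))) := by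
        rw [posB, hmi, hs1]
      have hpos2 : posB n (sB n n * v) (-(n:ℤ)) = ordVal n (v⁻¹ (n:ℤ)) := by
        rw [posB, hmi, hs2]
      have hne := ordVal_ne hn hv hnPM hnnPM (by omega)
      have hCiff : Ci n n v ↔ ordVal n (v⁻¹ (n:ℤ)) < ordVal n (v⁻¹ (-(n:ℤ))) := by
        rw [Ci, tgt_n]
      rw [hgen n hn le_rfl v]
      by_cases hC : Ci n n v
      · rw [if_pos ((descent_iff hn le_rfl hv).mpr hC)]
        rw [hCiff] at hC
        have hfix : hopStepB n (n:ℤ) [-(n:ℤ)] (sB n n * v) = sB n n * v := by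
          rw [hopStep_n hn, if_neg (by rw [hpos1, hpos2]; omega)]
        rw [hopB, Function.iterate_fixed hfix]
      · rw [if_neg (fun hc => hC ((descent_iff hn le_rfl hv).mp hc))]
        rw [hCiff] at hC
        have hstep1 : hopStepB n (n:ℤ) [-(n:ℤ)] (sB n n * v) = v := by
          rw [hopStep_n hn, if_pos (by rw [hpos1, hpos2]; omega)]
          rw [← mul_assoc, sB_invol hn le_rfl, one_mul]
        have hstep2 : hopStepB n (n:ℤ) [-(n:ℤ)] v = v := by
          rw [hopStep_n hn, if_neg (by rw [posB, posB]; omega)]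
        rw [hopB]
        have h2n : 2*n = (2*n - 1) + 1 := by omega
        rw [h2n, Function.iterate_succ_apply, hstep1, Function.iterate_fixed hstep2]
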